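/- arXiv:2009.06885 — 2 statements merged into one kernel-verified Lean document; each statement's English description precedes it below -/
import Mathlib

section
/- (Putinar's Positivstellensatz) Let g₁, …, g_m ∈ ℝ[x₁,…,x_n] and S = {x ∈ ℝⁿ : g_i(x) ≥ 0 for i = 1,…,m}. Let M_S = {σ₀ + Σ_{j=1}^m σ_j g_j : σ₀, σ₁, …, σ_m are sums of squares of polynomials} be the associated quadratic module, and assume M_S is Archimedean (i.e., there exists N ∈ ℕ with N − Σ_{i=1}^n x_i² ∈ M_S; this implies S is compact). If V ∈ ℝ[x₁,…,x_n] satisfies V(x) > 0 for all x ∈ S, then V ∈ M_S. -/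
/-- A multivariate real polynomial is a sum of squares. -/
def IsSOS {n : ℕ} (p : MvPolynomial (Fin n) ℝ) : Prop :=
  ∃ (k : ℕ) (q : Fin k → MvPolynomial (Fin n) ℝ), p = ∑ i, (q i) ^ 2

/-- Membership in the quadratic module generated by `g 1, …, g m`:
`p = σ₀ + Σ_{j=1}^m σⱼ gⱼ` with all `σⱼ` sums of squares. -/
def MemQuadraticModule {n m : ℕ} (g : Fin m → MvPolynomial (Fin n) ℝ)
    (p : MvPolynomial (Fin n) ℝ) : Prop :=
  ∃ σ₀ : MvPolynomial (Fin n) ℝ, ∃ σ : Fin m → MvPolynomial (Fin n) ℝ,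
    IsSOS σ₀ ∧ (∀ j, IsSOS (σ j)) ∧ p = σ₀ + ∑ j, σ j * g j

section SOSBasic
variable {n : ℕ}

theorem isSOS_iff_isSumSq {p : MvPolynomial (Fin n) ℝ} : IsSOS p ↔ IsSumSq p := by
  constructor
  · rintro ⟨k, q, rfl⟩
    have : IsSumSq (∑ i : Fin k, q i * q i) := IsSumSq.sum_mul_self _ _
    simpa [← pow_two] using this
  · intro h
    induction h with
    | zero => exact ⟨0, 0, by simp⟩
    | sq_add a _ ih =>
      obtain ⟨k, q, rfl⟩ := ih
      exact ⟨k + 1, Fin.cons a q, by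
        rw [Fin.sum_univ_succ]; simp [Fin.cons, pow_two]⟩

theorem IsSOS.zero : IsSOS (0 : MvPolynomial (Fin n) ℝ) := ⟨0, 0, by simp⟩

theorem IsSOS.add {p q : MvPolynomial (Fin n) ℝ} (hp : IsSOS p) (hq : IsSOS q) :
    IsSOS (p + q) :=
  isSOS_iff_isSumSq.2 ((isSOS_iff_isSumSq.1 hp).add (isSOS_iff_isSumSq.1 hq))

theorem IsSOS.sq (p : MvPolynomial (Fin n) ℝ) : IsSOS (p ^ 2) := ⟨1, fun _ => p, by simp⟩

theorem IsSOS.sq_mul {a q : MvPolynomial (Fin n) ℝ} (hq : IsSOS q) : IsSOS (a ^ 2 * q) := by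
  obtain ⟨k, r, rfl⟩ := hq
  refine ⟨k, fun i => a * r i, ?_⟩
  rw [Finset.mul_sum]
  exact Finset.sum_congr rfl fun i _ => by ring

theorem IsSOS.mul {p q : MvPolynomial (Fin n) ℝ} (hp : IsSOS p) (hq : IsSOS q) :
    IsSOS (p * q) := by
  rw [isSOS_iff_isSumSq] at hp
  induction hp with
  | zero => simpa using IsSOS.zero
  | sq_add a hS ih =>
    rw [add_mul]
    refine IsSOS.add ?_ ih
    have : a * a * q = a ^ 2 * q := by ring
    rw [this]
    exact IsSOS.sq_mul hq

theorem IsSOS.C {c : ℝ} (hc : 0 ≤ c) : IsSOS (MvPolynomial.C (σ := Fin n) c) := by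
  refine ⟨1, fun _ => MvPolynomial.C (Real.sqrt c), ?_⟩
  simp [← map_pow, Real.sq_sqrt hc]

theorem IsSOS.one : IsSOS (1 : MvPolynomial (Fin n) ℝ) := by
  simpa using IsSOS.C (n := n) (zero_le_one (α := ℝ))

end SOSBasic
namespace Putinar
variable {n m : ℕ}
local notation "R" => MvPolynomial (Fin n) ℝ

section QM
variable (g : Fin m → MvPolynomial (Fin n) ℝ)

local notation "Mem" => MemQuadraticModule g

theorem mem_of_sos {p : R} (hp : IsSOS p) : Mem p :=
  ⟨p, 0, hp, fun _ => IsSOS.zero, by simp⟩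

theorem mem_zero : Mem (0 : R) := mem_of_sos g IsSOS.zero

theorem mem_const {c : ℝ} (hc : 0 ≤ c) : Mem (MvPolynomial.C c) := mem_of_sos g (IsSOS.C hc)

theorem mem_add {p q : R} (hp : Mem p) (hq : Mem q) : Mem (p + q) := by
  obtain ⟨a, σ, ha, hσ, rfl⟩ := hp
  obtain ⟨b, τ, hb, hτ, rfl⟩ := hq
  refine ⟨a + b, fun j => σ j + τ j, ha.add hb, fun j => (hσ j).add (hτ j), ?_⟩
  simp only [add_mul]
  rw [Finset.sum_add_distrib]
  ring

theorem mem_sos_mul {s p : R} (hs : IsSOS s) (hp : Mem p) : Mem (s * p) := by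
  obtain ⟨a, σ, ha, hσ, rfl⟩ := hp
  refine ⟨s * a, fun j => s * σ j, hs.mul ha, fun j => hs.mul (hσ j), ?_⟩
  rw [mul_add, Finset.mul_sum]
  congr 1
  exact Finset.sum_congr rfl fun j _ => by ring

theorem mem_smul {c : ℝ} {p : R} (hc : 0 ≤ c) (hp : Mem p) : Mem (MvPolynomial.C c * p) :=
  mem_sos_mul g (IsSOS.C hc) hp

theorem mem_g (j : Fin m) : Mem (g j) := by
  refine ⟨0, fun i => if i = j then 1 else 0, IsSOS.zero, ?_, ?_⟩
  · intro i; by_cases h : i = j <;> simp [h, IsSOS.one, IsSOS.zero]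
  · rw [Finset.sum_eq_single j (fun b _ hb => by simp [hb]) (by simp)]
    simp

theorem mem_add_const {p : R} {c : ℝ} (hc : 0 ≤ c) (hp : Mem p) : Mem (p + MvPolynomial.C c) :=
  mem_add g hp (mem_const g hc)

theorem mem_of_two_mul {p : R} (h : Mem (MvPolynomial.C (2:ℝ) * p)) : Mem p := by
  have := mem_smul g (c := 1/2) (by norm_num) h
  rw [← mul_assoc, ← map_mul] at this
  norm_num at this
  exact this

end QM

section Arch
variable (g : Fin m → MvPolynomial (Fin n) ℝ)

local notation "Mem" => MemQuadraticModule g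

/-- bounded elements -/
def Bnd (p : R) : Prop := ∃ N : ℝ, Mem (MvPolynomial.C N - p) ∧ Mem (MvPolynomial.C N + p)

theorem bnd_neg {p : R} (hp : Bnd g p) : Bnd g (-p) := by
  obtain ⟨N, h1, h2⟩ := hp
  exact ⟨N, by simpa [sub_neg_eq_add] using h2, by simpa [sub_eq_add_neg] using h1⟩

theorem bnd_C (c : ℝ) : Bnd g (MvPolynomial.C c) := by
  refine ⟨|c|, ?_, ?_⟩
  · rw [← map_sub]; exact mem_const g (by simp [sub_nonneg, le_abs_self])
  · rw [← map_add]
    exact mem_const g (by nlinarith [neg_abs_le c, le_abs_self c])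

theorem bnd_add {p q : R} (hp : Bnd g p) (hq : Bnd g q) : Bnd g (p + q) := by
  obtain ⟨N, h1, h2⟩ := hp
  obtain ⟨K, h3, h4⟩ := hq
  refine ⟨N + K, ?_, ?_⟩
  · have := mem_add g h1 h3
    rw [show MvPolynomial.C (N + K) - (p + q)
      = (MvPolynomial.C N - p) + (MvPolynomial.C K - q) by rw [map_add]; ring]
    exact this
  · have := mem_add g h2 h4
    rw [show MvPolynomial.C (N + K) + (p + q)
      = (MvPolynomial.C N + p) + (MvPolynomial.C K + q) by rw [map_add]; ring]
    exact this

theorem bnd_smul {p : R} (c : ℝ) (hp : Bnd g p) : Bnd g (MvPolynomial.C c * p) := by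
  rcases le_or_gt 0 c with hc | hc
  · obtain ⟨N, h1, h2⟩ := hp
    refine ⟨c * N, ?_, ?_⟩
    · rw [show MvPolynomial.C (c * N) - MvPolynomial.C c * p
        = MvPolynomial.C c * (MvPolynomial.C N - p) by rw [map_mul]; ring]
      exact mem_smul g hc h1
    · rw [show MvPolynomial.C (c * N) + MvPolynomial.C c * p
        = MvPolynomial.C c * (MvPolynomial.C N + p) by rw [map_mul]; ring]
      exact mem_smul g hc h2
  · obtain ⟨N, h1, h2⟩ := bnd_neg g hp
    refine ⟨(-c) * N, ?_, ?_⟩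
    · rw [show MvPolynomial.C (-c * N) - MvPolynomial.C c * p
        = MvPolynomial.C (-c) * (MvPolynomial.C N - (-p)) by
          simp only [map_mul, map_neg]; ring]
      exact mem_smul g (by linarith) h1
    · rw [show MvPolynomial.C (-c * N) + MvPolynomial.C c * p
        = MvPolynomial.C (-c) * (MvPolynomial.C N + (-p)) by
          simp only [map_mul, map_neg]; ring]
      exact mem_smul g (by linarith) h2

theorem bnd_sq {p : R} (hp : Bnd g p) : Bnd g (p ^ 2) := by
  obtain ⟨N, h1, h2⟩ := hp
  set K := max N 1 with hK
  have hK1 : (1:ℝ) ≤ K := le_max_right _ _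
  have hKpos : (0:ℝ) < K := by linarith
  have hNK : N ≤ K := le_max_left _ _
  have h1' : Mem (MvPolynomial.C K - p) := by
    rw [show MvPolynomial.C K - p = (MvPolynomial.C N - p) + MvPolynomial.C (K - N) by
      rw [map_sub]; ring]
    exact mem_add_const g (by linarith) h1
  have h2' : Mem (MvPolynomial.C K + p) := by
    rw [show MvPolynomial.C K + p = (MvPolynomial.C N + p) + MvPolynomial.C (K - N) by
      rw [map_sub]; ring]
    exact mem_add_const g (by linarith) h2
  refine ⟨K ^ 2, ?_, ?_⟩
  · have hmem : Mem ((MvPolynomial.C K + p) ^ 2 * (MvPolynomial.C K - p)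
        + (MvPolynomial.C K - p) ^ 2 * (MvPolynomial.C K + p)) :=
      mem_add g (mem_sos_mul g (IsSOS.sq _) h1') (mem_sos_mul g (IsSOS.sq _) h2')
    have := mem_smul g (c := 1 / (2 * K)) (by positivity) hmem
    rw [show MvPolynomial.C ((1:ℝ) / (2 * K)) * ((MvPolynomial.C K + p) ^ 2 * (MvPolynomial.C K - p)
        + (MvPolynomial.C K - p) ^ 2 * (MvPolynomial.C K + p))
        = MvPolynomial.C (1 / (2 * K) * (2 * K)) * (MvPolynomial.C (K ^ 2) - p ^ 2) by
      rw [map_mul, map_mul, map_pow, map_ofNat]; ring] at this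
    rw [div_mul_cancel₀, map_one, one_mul] at this
    · exact this
    · positivity
  · rw [show MvPolynomial.C (K ^ 2) + p ^ 2 = p ^ 2 + MvPolynomial.C (K ^ 2) by ring]
    exact mem_add_const g (by positivity) (mem_of_sos g (IsSOS.sq p))

theorem bnd_halve {p : R} (h : Bnd g (MvPolynomial.C (2:ℝ) * p)) : Bnd g p := by
  have := bnd_smul g (1/2 : ℝ) h
  rw [← mul_assoc, ← map_mul] at this
  norm_num at this
  exact this

theorem bnd_mul {p q : R} (hp : Bnd g p) (hq : Bnd g q) : Bnd g (p * q) := by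
  apply bnd_halve g
  rw [show MvPolynomial.C (2:ℝ) * (p * q) = (p+q)^2 + (-(p^2) + -(q^2)) by
    rw [map_ofNat]; ring]
  exact bnd_add g (bnd_sq g (bnd_add g hp hq))
    (bnd_add g (bnd_neg g (bnd_sq g hp)) (bnd_neg g (bnd_sq g hq)))

variable (harch : ∃ N : ℕ, MemQuadraticModule g
      ((N : MvPolynomial (Fin n) ℝ) - ∑ i : Fin n, (MvPolynomial.X i) ^ 2))

include harch in
theorem bnd_X (i : Fin n) : Bnd g (MvPolynomial.X i) := by
  obtain ⟨N, hN⟩ := harch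
  have hX2 : Mem (MvPolynomial.C (N : ℝ) - MvPolynomial.X i ^ 2) := by
    have hs : IsSOS (∑ j ∈ Finset.univ.erase i, (MvPolynomial.X j : R) ^ 2) := by
      rw [isSOS_iff_isSumSq]
      have : (∑ j ∈ Finset.univ.erase i, (MvPolynomial.X j : R) ^ 2)
          = ∑ j ∈ Finset.univ.erase i, (MvPolynomial.X j : R) * MvPolynomial.X j :=
        Finset.sum_congr rfl fun j _ => by ring
      rw [this]
      exact IsSumSq.sum_mul_self _ _
    have hsum := mem_add g hN (mem_of_sos g hs)
    rw [show ((N : MvPolynomial (Fin n) ℝ) - ∑ j : Fin n, (MvPolynomial.X j) ^ 2)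
        + (∑ j ∈ Finset.univ.erase i, (MvPolynomial.X j : R) ^ 2)
        = MvPolynomial.C (N : ℝ) - MvPolynomial.X i ^ 2 by
      rw [← Finset.add_sum_erase _ _ (Finset.mem_univ i), MvPolynomial.C_eq_coe_nat]
      push_cast
      ring] at hsum
    exact hsum
  refine ⟨((N : ℝ) + 1) / 2, ?_, ?_⟩
  · apply mem_of_two_mul g
    rw [show MvPolynomial.C (2:ℝ) * (MvPolynomial.C (((N:ℝ) + 1) / 2) - MvPolynomial.X i)
        = (MvPolynomial.X i - 1) ^ 2 + (MvPolynomial.C (N : ℝ) - MvPolynomial.X i ^ 2) by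
      rw [mul_sub, ← map_mul, show (2:ℝ) * (((N:ℝ) + 1) / 2) = (N:ℝ) + 1 by ring,
        map_add, map_one, map_ofNat]
      ring]
    exact mem_add g (mem_of_sos g (IsSOS.sq _)) hX2
  · apply mem_of_two_mul g
    rw [show MvPolynomial.C (2:ℝ) * (MvPolynomial.C (((N:ℝ) + 1) / 2) + MvPolynomial.X i)
        = (MvPolynomial.X i + 1) ^ 2 + (MvPolynomial.C (N : ℝ) - MvPolynomial.X i ^ 2) by
      rw [mul_add, ← map_mul, show (2:ℝ) * (((N:ℝ) + 1) / 2) = (N:ℝ) + 1 by ring,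
        map_add, map_one, map_ofNat]
      ring]
    exact mem_add g (mem_of_sos g (IsSOS.sq _)) hX2

include harch in
theorem bnd_all (p : R) : Bnd g p := by
  induction p using MvPolynomial.induction_on with
  | C c => exact bnd_C g c
  | add p q hp hq => exact bnd_add g hp hq
  | mul_X p i hp => exact bnd_mul g hp (bnd_X g harch i)

end Arch
section Iter
open MvPolynomial
variable (g : Fin m → MvPolynomial (Fin n) ℝ)

local notation "Mem" => MemQuadraticModule g

theorem core_step {a σ s : R} {k u ℓ c : ℝ}
    (hσ : IsSOS σ) (hs : Mem s) (heq : σ * a = 1 + s)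
    (hk : Mem (MvPolynomial.C k - σ)) (hu : Mem (MvPolynomial.C u - a))
    (hl : Mem (a + MvPolynomial.C ℓ))
    (hc : 0 < c) (hlu : 0 ≤ ℓ + u) (hck : c * ((ℓ + u) * k) ≤ 2 * ℓ) :
    Mem (a + MvPolynomial.C (ℓ - 2 * c)) := by
  have hs' : s = σ * a - 1 := by rw [heq]; ring
  subst hs'
  have hiden : a + MvPolynomial.C (ℓ - 2 * c)
      = (a + MvPolynomial.C ℓ) * (1 - MvPolynomial.C c * σ) ^ 2
      + MvPolynomial.C (2 * c) * (σ * a - 1)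
      + MvPolynomial.C (c ^ 2) * (σ * (σ * (MvPolynomial.C u - a)))
      + MvPolynomial.C c * (σ * (MvPolynomial.C (c * (ℓ + u)) * (MvPolynomial.C k - σ)))
      + MvPolynomial.C c * (σ * MvPolynomial.C (2 * ℓ - c * ((ℓ + u) * k))) := by
    simp only [map_sub, map_mul, map_add, map_pow, map_ofNat]
    ring
  rw [hiden]
  refine mem_add g (mem_add g (mem_add g (mem_add g ?_ ?_) ?_) ?_) ?_
  · rw [mul_comm]
    exact mem_sos_mul g (IsSOS.sq _) hl
  · exact mem_smul g (by linarith) hs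
  · exact mem_smul g (by positivity) (mem_sos_mul g hσ (mem_sos_mul g hσ hu))
  · exact mem_smul g hc.le (mem_sos_mul g hσ (mem_smul g (by nlinarith) hk))
  · exact mem_smul g hc.le (mem_sos_mul g hσ (mem_const g (by linarith)))

variable (harch : ∃ N : ℕ, MemQuadraticModule g
      ((N : MvPolynomial (Fin n) ℝ) - ∑ i : Fin n, (MvPolynomial.X i) ^ 2))

include harch in
theorem mem_add_eps {a σ : R} (hσ : IsSOS σ) (hs : Mem (σ * a - 1)) :
    ∀ ε : ℝ, 0 < ε → Mem (a + MvPolynomial.C ε) := by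
  -- bounds
  obtain ⟨k₀, hk₀, -⟩ := bnd_all g harch σ
  obtain ⟨u₀, hu₀, hl₀⟩ := bnd_all g harch a
  set k := max k₀ 1 with hkdef
  set u := max u₀ 1 with hudef
  have hk1 : (1:ℝ) ≤ k := le_max_right _ _
  have hu1 : (1:ℝ) ≤ u := le_max_right _ _
  have hk : Mem (MvPolynomial.C k - σ) := by
    rw [show MvPolynomial.C k - σ = (MvPolynomial.C k₀ - σ) + MvPolynomial.C (k - k₀) by
      rw [map_sub]; ring]
    exact mem_add_const g (by simp [hkdef, sub_nonneg, le_max_left]) hk₀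
  have hu : Mem (MvPolynomial.C u - a) := by
    rw [show MvPolynomial.C u - a = (MvPolynomial.C u₀ - a) + MvPolynomial.C (u - u₀) by
      rw [map_sub]; ring]
    exact mem_add_const g (by simp [hudef, sub_nonneg, le_max_left]) hu₀
  have hl : Mem (a + MvPolynomial.C u) := by
    rw [show a + MvPolynomial.C u = (MvPolynomial.C u₀ + a) + MvPolynomial.C (u - u₀) by
      rw [map_sub]; ring]
    exact mem_add_const g (by simp [hudef, sub_nonneg, le_max_left]) hl₀
  -- the contraction factor
  set θ : ℝ := 1 - 1 / (k * (u + u)) with hθdef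
  have hkupos : (0:ℝ) < k * (u + u) := by nlinarith
  have hku2 : (2:ℝ) ≤ k * (u + u) := by nlinarith
  have hθlt : θ < 1 := by
    rw [hθdef]; have : (0:ℝ) < 1 / (k * (u + u)) := by positivity
    linarith
  have hθpos : (0:ℝ) < θ := by
    rw [hθdef]
    have : 1 / (k * (u + u)) ≤ 1/2 := by
      rw [div_le_div_iff₀ hkupos (by norm_num)]; linarith
    linarith
  clear_value θ
  -- main induction
  have main : ∀ N : ℕ, Mem (a + MvPolynomial.C (u * θ ^ N)) := by
    intro N
    induction N with
    | zero => simpa using hl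
    | succ N ih =>
      set ℓ : ℝ := u * θ ^ N with hldef
      have hθN1 : θ ^ N ≤ 1 := pow_le_one₀ hθpos.le hθlt.le
      have hθNpos : 0 < θ ^ N := pow_pos hθpos N
      have hℓpos : 0 < ℓ := by positivity
      have hℓu : ℓ ≤ u := by
        calc ℓ = u * θ ^ N := rfl
        _ ≤ u * 1 := by apply mul_le_mul_of_nonneg_left hθN1; linarith
        _ = u := by ring
      clear_value ℓ
      have hlupos : (0:ℝ) < ℓ + u := by linarith
      have hB : (0:ℝ) < k * (ℓ + u) := by nlinarith
      set c : ℝ := ℓ / (k * (ℓ + u)) with hcdef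
      have hc : 0 < c := by positivity
      have hck : c * ((ℓ + u) * k) = ℓ := by
        rw [hcdef, mul_comm (ℓ + u) k, div_mul_cancel₀ _ hB.ne']
      have step := core_step g hσ hs (by ring) hk hu ih hc (by linarith)
        (by rw [hck]; linarith)
      -- pad up to the next level
      have hpad : ℓ - 2 * c ≤ u * θ ^ (N + 1) := by
        have h1 : u * θ ^ (N+1) = ℓ * θ := by rw [hldef]; ring
        have h2 : ℓ * (1 - θ) ≤ 2 * c := by
          have hge : k * (ℓ + u) ≤ k * (u + u) := by nlinarith
          have key : ℓ / (k * (u + u)) ≤ 2 * ℓ / (k * (ℓ + u)) :=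
            div_le_div₀ (by linarith) (by linarith) hB hge
          have e1 : ℓ * (1 - θ) = ℓ / (k * (u + u)) := by
            rw [hθdef]; field_simp; ring
          have e2 : 2 * c = 2 * ℓ / (k * (ℓ + u)) := by
            rw [hcdef]; ring
          rw [e1, e2]; exact key
        nlinarith
      clear_value c
      rw [show a + MvPolynomial.C (u * θ ^ (N+1))
          = (a + MvPolynomial.C (ℓ - 2 * c)) + MvPolynomial.C (u * θ ^ (N+1) - (ℓ - 2*c)) by
        simp only [map_sub, map_add, map_mul, map_pow, map_ofNat]; ring]
      exact mem_add_const g (by linarith) step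
  intro ε hε
  obtain ⟨N, hN⟩ := exists_pow_lt_of_lt_one (x := ε / u) (by positivity) hθlt
  have hval : u * θ ^ N ≤ ε := by
    have := mul_lt_mul_of_pos_left hN (by linarith : (0:ℝ) < u)
    rw [mul_div_cancel₀] at this
    · linarith
    · linarith
  rw [show a + MvPolynomial.C ε
      = (a + MvPolynomial.C (u * θ ^ N)) + MvPolynomial.C (ε - u * θ ^ N) by
    simp only [map_sub, map_add, map_mul, map_pow, map_ofNat]; ring]
  exact mem_add_const g (by linarith) (main N)

include harch in
theorem mem_of_sos_mul {V σ : R} (hσ : IsSOS σ) (h : Mem (σ * V - 1)) : Mem V := by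
  obtain ⟨k₀, hk₀, -⟩ := bnd_all g harch σ
  set k := max k₀ 1 with hkdef
  have hk1 : (1:ℝ) ≤ k := le_max_right _ _
  have hk : Mem (MvPolynomial.C k - σ) := by
    rw [show MvPolynomial.C k - σ = (MvPolynomial.C k₀ - σ) + MvPolynomial.C (k - k₀) by
      rw [map_sub]; ring]
    exact mem_add_const g (by simp [hkdef, sub_nonneg, le_max_left]) hk₀
  set δ : ℝ := 1 / (2 * k) with hδdef
  have hδpos : 0 < δ := by positivity
  have hδk : 2 * δ * k = 1 := by
    rw [hδdef]; field_simp
  clear_value δ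
  set a : R := MvPolynomial.C (2:ℝ) * V - MvPolynomial.C (2*δ) with hadef
  have ha : Mem (σ * a - 1) := by
    have hC : (MvPolynomial.C (2*δ) : R) * MvPolynomial.C k = 1 := by
      rw [← map_mul, hδk, map_one]
    have hrw : σ * a - 1 = MvPolynomial.C (2:ℝ) * (σ * V - 1)
        + MvPolynomial.C (2*δ) * (MvPolynomial.C k - σ) := by
      rw [hadef]; simp only [map_ofNat]; linear_combination -hC
    rw [hrw]
    exact mem_add g (mem_smul g (by norm_num) h) (mem_smul g (by positivity) hk)
  have h1 := mem_add_eps g harch hσ ha (2*δ) (by positivity)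
  have h2 : Mem (MvPolynomial.C (2:ℝ) * V) := by
    rw [show MvPolynomial.C (2:ℝ) * V = a + MvPolynomial.C (2*δ) by rw [hadef]; ring]
    exact h1
  exact mem_of_two_mul g h2

end Iter
section Zorn
variable {n : ℕ}

/-- A quadratic module: contains all SOS, closed under addition and multiplication by SOS. -/
def QM (Q : Set (MvPolynomial (Fin n) ℝ)) : Prop :=
  (∀ s : MvPolynomial (Fin n) ℝ, IsSOS s → s ∈ Q)
  ∧ (∀ a b : MvPolynomial (Fin n) ℝ, a ∈ Q → b ∈ Q → a + b ∈ Q)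
  ∧ (∀ s a : MvPolynomial (Fin n) ℝ, IsSOS s → a ∈ Q → s * a ∈ Q)

variable {Q : Set (MvPolynomial (Fin n) ℝ)} (hQ : QM Q)

include hQ

theorem QM.sos {s : MvPolynomial (Fin n) ℝ} (hs : IsSOS s) : s ∈ Q := hQ.1 s hs

theorem QM.add' {a b : MvPolynomial (Fin n) ℝ} (ha : a ∈ Q) (hb : b ∈ Q) : a + b ∈ Q :=
  hQ.2.1 a b ha hb

theorem QM.sos_mul {s a : MvPolynomial (Fin n) ℝ} (hs : IsSOS s) (ha : a ∈ Q) : s * a ∈ Q :=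
  hQ.2.2 s a hs ha

theorem QM.smul' {c : ℝ} {a : MvPolynomial (Fin n) ℝ} (hc : 0 ≤ c) (ha : a ∈ Q) :
    MvPolynomial.C c * a ∈ Q :=
  hQ.sos_mul (IsSOS.C hc) ha

theorem QM.const {c : ℝ} (hc : 0 ≤ c) : (MvPolynomial.C c : MvPolynomial (Fin n) ℝ) ∈ Q :=
  hQ.sos (IsSOS.C hc)

end Zorn

section Zorn2
variable {n : ℕ} {S : Set (Set (MvPolynomial (Fin n) ℝ))}

theorem maximal_tri {M₁ Q : Set (MvPolynomial (Fin n) ℝ)}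
    (hmax : Maximal (fun Q => QM Q ∧ (-1 : MvPolynomial (Fin n) ℝ) ∉ Q ∧ M₁ ⊆ Q) Q)
    (b : MvPolynomial (Fin n) ℝ) : b ∈ Q ∨ -b ∈ Q := by
  obtain ⟨⟨hQ, hone, hM1⟩, hmx⟩ := hmax
  by_contra hcon
  push_neg at hcon
  obtain ⟨hb, hnb⟩ := hcon
  -- the extension of Q by c * b, c SOS
  have ext : ∀ c : MvPolynomial (Fin n) ℝ,
      c ∉ Q → ∃ q s : MvPolynomial (Fin n) ℝ, q ∈ Q ∧ IsSOS s ∧ (-1 : _) = q + s * c := by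
    intro c hc
    set Q1 : Set (MvPolynomial (Fin n) ℝ) :=
      {x | ∃ q s, q ∈ Q ∧ IsSOS s ∧ x = q + s * c} with hQ1def
    have hQQ1 : Q ⊆ Q1 := fun q hq => ⟨q, 0, hq, IsSOS.zero, by simp⟩
    have hcQ1 : c ∈ Q1 := ⟨0, 1, hQ.sos IsSOS.zero, IsSOS.one, by simp⟩
    have hQ1 : QM Q1 := by
      refine ⟨fun s hs => hQQ1 (hQ.sos hs), ?_, ?_⟩
      · rintro a a' ⟨q, s, hq, hs, rfl⟩ ⟨q', s', hq', hs', rfl⟩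
        exact ⟨q + q', s + s', hQ.add' hq hq', hs.add hs', by ring⟩
      · rintro s a hs ⟨q, t, hq, ht, rfl⟩
        exact ⟨s * q, s * t, hQ.sos_mul hs hq, hs.mul ht, by ring⟩
    by_cases hone1 : (-1 : MvPolynomial (Fin n) ℝ) ∈ Q1
    · obtain ⟨q, s, hq, hs, heq⟩ := hone1
      exact ⟨q, s, hq, hs, heq⟩
    · have : Q1 ⊆ Q := hmx ⟨hQ1, hone1, fun x hx => hQQ1 (hM1 hx)⟩ hQQ1
      exact absurd (this hcQ1) hc
  obtain ⟨q₁, s₁, hq₁, hs₁, he₁⟩ := ext b hb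
  obtain ⟨q₂, s₂, hq₂, hs₂, he₂⟩ := ext (-b) hnb
  -- -(s₁+s₂) ∈ Q
  have hsum : -(s₁ + s₂) = s₂ * q₁ + s₁ * q₂ := by
    have h1 : s₂ * (-1 : MvPolynomial (Fin n) ℝ) = s₂ * q₁ + s₂ * (s₁ * b) := by
      rw [he₁]; ring
    have h2 : s₁ * (-1 : MvPolynomial (Fin n) ℝ) = s₁ * q₂ + s₁ * (s₂ * (-b)) := by
      rw [he₂]; ring
    linear_combination h1 + h2
  have hns : -(s₁ + s₂) ∈ Q := by
    rw [hsum]; exact hQ.add' (hQ.sos_mul hs₂ hq₁) (hQ.sos_mul hs₁ hq₂)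
  have hns₁ : -s₁ ∈ Q := by
    have := hQ.add' hns (hQ.sos hs₂)
    rw [show -(s₁ + s₂) + s₂ = -s₁ by ring] at this
    exact this
  have hs₁b : s₁ * b ∈ Q := by
    have h1 : (b + 1) ^ 2 * s₁ ∈ Q := hQ.sos_mul (IsSOS.sq _) (hQ.sos hs₁)
    have h2 : (b - 1) ^ 2 * (-s₁) ∈ Q := hQ.sos_mul (IsSOS.sq _) hns₁
    have := hQ.smul' (c := 1/4) (by norm_num) (hQ.add' h1 h2)
    rw [show MvPolynomial.C ((1:ℝ)/4) * ((b + 1) ^ 2 * s₁ + (b - 1) ^ 2 * (-s₁))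
        = MvPolynomial.C ((1:ℝ)/4) * (MvPolynomial.C (4:ℝ) * (s₁ * b)) by
      rw [map_ofNat]; ring] at this
    rw [← mul_assoc, ← map_mul] at this
    norm_num at this
    exact this
  have : (-1 : MvPolynomial (Fin n) ℝ) ∈ Q := by
    rw [he₁]; exact hQ.add' hq₁ hs₁b
  exact hone this

theorem exists_maximal_qm {M₁ : Set (MvPolynomial (Fin n) ℝ)} (hM₁ : QM M₁)
    (hone : (-1 : MvPolynomial (Fin n) ℝ) ∉ M₁) :
    ∃ Q : Set (MvPolynomial (Fin n) ℝ), QM Q ∧ (-1 : MvPolynomial (Fin n) ℝ) ∉ Q ∧ M₁ ⊆ Q ∧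
      ∀ b : MvPolynomial (Fin n) ℝ, b ∈ Q ∨ -b ∈ Q := by
  set S : Set (Set (MvPolynomial (Fin n) ℝ)) :=
    {Q | QM Q ∧ (-1 : MvPolynomial (Fin n) ℝ) ∉ Q ∧ M₁ ⊆ Q} with hSdef
  have hM₁S : M₁ ∈ S := ⟨hM₁, hone, subset_rfl⟩
  have hchain : ∀ c ⊆ S, IsChain (· ⊆ ·) c → c.Nonempty →
      ∃ ub ∈ S, ∀ s ∈ c, s ⊆ ub := by
    intro c hcS hch ⟨Q₀, hQ₀⟩
    refine ⟨⋃₀ c, ⟨⟨?_, ?_, ?_⟩, ?_, ?_⟩, fun s hs => Set.subset_sUnion_of_mem hs⟩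
    · intro s hs
      exact Set.mem_sUnion.2 ⟨Q₀, hQ₀, (hcS hQ₀).1.sos hs⟩
    · rintro a b ⟨Qa, hQa, ha⟩ ⟨Qb, hQb, hb⟩
      rcases hch.total hQa hQb with h | h
      · exact Set.mem_sUnion.2 ⟨Qb, hQb, (hcS hQb).1.add' (h ha) hb⟩
      · exact Set.mem_sUnion.2 ⟨Qa, hQa, (hcS hQa).1.add' ha (h hb)⟩
    · rintro s a hs ⟨Qa, hQa, ha⟩
      exact Set.mem_sUnion.2 ⟨Qa, hQa, (hcS hQa).1.sos_mul hs ha⟩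
    · rintro ⟨Qa, hQa, ha⟩
      exact (hcS hQa).2.1 ha
    · exact fun x hx => Set.mem_sUnion.2 ⟨Q₀, hQ₀, (hcS hQ₀).2.2 hx⟩
  obtain ⟨Q, hMQ, hmax⟩ := zorn_subset_nonempty S hchain M₁ hM₁S
  obtain ⟨hQ, honeQ, hM₁Q⟩ := hmax.prop
  exact ⟨Q, hQ, honeQ, hM₁Q, maximal_tri hmax⟩

end Zorn2
section Char
variable {n : ℕ}

/-- Dedekind cut functional associated to a quadratic module. -/
noncomputable def phi (Q : Set (MvPolynomial (Fin n) ℝ)) (p : MvPolynomial (Fin n) ℝ) : ℝ :=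
  sInf {r : ℝ | MvPolynomial.C r - p ∈ Q}

variable {Q : Set (MvPolynomial (Fin n) ℝ)} (hQ : QM Q)
  (hone : (-1 : MvPolynomial (Fin n) ℝ) ∉ Q)
  (htri : ∀ b : MvPolynomial (Fin n) ℝ, b ∈ Q ∨ -b ∈ Q)
  (hbnd : ∀ p : MvPolynomial (Fin n) ℝ, ∃ N : ℝ,
    (MvPolynomial.C N - p) ∈ Q ∧ (MvPolynomial.C N + p) ∈ Q)

include hQ hone

theorem const_nonneg {t : ℝ} (ht : (MvPolynomial.C t : MvPolynomial (Fin n) ℝ) ∈ Q) : 0 ≤ t := by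
  by_contra hlt
  push_neg at hlt
  have h := hQ.smul' (c := -1/t) (le_of_lt (div_pos_of_neg_of_neg (by norm_num) hlt)) ht
  rw [← map_mul, div_mul_cancel₀ _ hlt.ne] at h
  rw [show (MvPolynomial.C (-1 : ℝ) : MvPolynomial (Fin n) ℝ) = -1 by
    rw [map_neg, map_one]] at h
  exact hone h

include hbnd

theorem U_nonempty (p : MvPolynomial (Fin n) ℝ) :
    {r : ℝ | MvPolynomial.C r - p ∈ Q}.Nonempty := by
  obtain ⟨N, h1, _⟩ := hbnd p
  exact ⟨N, h1⟩

theorem U_bddBelow (p : MvPolynomial (Fin n) ℝ) :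
    BddBelow {r : ℝ | MvPolynomial.C r - p ∈ Q} := by
  obtain ⟨N, _, h2⟩ := hbnd p
  refine ⟨-N, fun r hr => ?_⟩
  have := hQ.add' hr h2
  rw [show MvPolynomial.C r - p + (MvPolynomial.C N + p) = MvPolynomial.C (r + N) by
    rw [map_add]; ring] at this
  have := const_nonneg hQ hone this
  linarith

theorem phi_le {p : MvPolynomial (Fin n) ℝ} {r : ℝ} (hr : MvPolynomial.C r - p ∈ Q) :
    phi Q p ≤ r :=
  csInf_le (U_bddBelow hQ hone hbnd p) hr

theorem mem_U_of_gt {p : MvPolynomial (Fin n) ℝ} {r : ℝ} (hr : phi Q p < r) :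
    MvPolynomial.C r - p ∈ Q := by
  obtain ⟨t, ht, htr⟩ := (csInf_lt_iff (U_bddBelow hQ hone hbnd p)
    (U_nonempty hQ hone hbnd p)).1 hr
  have := hQ.add' ht (hQ.const (c := r - t) (by linarith))
  rw [show MvPolynomial.C t - p + MvPolynomial.C (r - t) = MvPolynomial.C r - p by
    rw [map_sub]; ring] at this
  exact this

theorem le_phi {p : MvPolynomial (Fin n) ℝ} {r : ℝ}
    (h : ∀ t : ℝ, MvPolynomial.C t - p ∈ Q → r ≤ t) : r ≤ phi Q p :=
  le_csInf (U_nonempty hQ hone hbnd p) h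

theorem phi_nonneg_of_mem {p : MvPolynomial (Fin n) ℝ} (hp : p ∈ Q) : 0 ≤ phi Q p := by
  refine le_phi hQ hone hbnd fun t ht => ?_
  have := hQ.add' ht hp
  rw [sub_add_cancel] at this
  exact const_nonneg hQ hone this

theorem phi_const (t : ℝ) : phi Q (MvPolynomial.C t) = t := by
  refine le_antisymm (phi_le hQ hone hbnd (by rw [sub_self]; exact hQ.sos IsSOS.zero)) ?_
  refine le_phi hQ hone hbnd fun r hr => ?_
  rw [← map_sub] at hr
  have := const_nonneg hQ hone hr
  linarith

theorem phi_add_le (p q : MvPolynomial (Fin n) ℝ) :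
    phi Q (p + q) ≤ phi Q p + phi Q q := by
  by_contra hlt
  push_neg at hlt
  set ε := (phi Q (p + q) - (phi Q p + phi Q q)) / 2 with hε
  have hεpos : 0 < ε := by rw [hε]; linarith
  clear_value ε
  have h1 : MvPolynomial.C (phi Q p + ε/2) - p ∈ Q :=
    mem_U_of_gt hQ hone hbnd (by linarith)
  have h2 : MvPolynomial.C (phi Q q + ε/2) - q ∈ Q :=
    mem_U_of_gt hQ hone hbnd (by linarith)
  have h3 := hQ.add' h1 h2
  rw [show MvPolynomial.C (phi Q p + ε/2) - p + (MvPolynomial.C (phi Q q + ε/2) - q)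
      = MvPolynomial.C (phi Q p + ε/2 + (phi Q q + ε/2)) - (p + q) by
    simp only [map_add]; ring] at h3
  have := phi_le hQ hone hbnd h3
  linarith

include htri

theorem phi_neg (p : MvPolynomial (Fin n) ℝ) : phi Q (-p) = -phi Q p := by
  have hge : -phi Q p ≤ phi Q (-p) := by
    refine le_phi hQ hone hbnd fun t ht => ?_
    -- t + phi p ≥ 0
    have key : ∀ r : ℝ, MvPolynomial.C r - p ∈ Q → -t ≤ r := by
      intro r hr
      have := hQ.add' hr ht
      rw [show MvPolynomial.C r - p + (MvPolynomial.C t - -p) = MvPolynomial.C (r + t) by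
        rw [map_add]; ring] at this
      have := const_nonneg hQ hone this
      linarith
    have := le_phi hQ hone hbnd key
    linarith
  have hle : phi Q (-p) ≤ -phi Q p := by
    by_contra hlt
    push_neg at hlt
    obtain ⟨c, hc1, hc2⟩ := exists_between (show -phi Q (-p) < phi Q p by linarith)
    rcases htri (MvPolynomial.C c - p) with h | h
    · have := phi_le hQ hone hbnd h
      linarith
    · rw [show -(MvPolynomial.C c - p) = MvPolynomial.C (-c) - -p by rw [map_neg]; ring] at h
      have := phi_le hQ hone hbnd h
      linarith
  linarith

theorem phi_add (p q : MvPolynomial (Fin n) ℝ) : phi Q (p + q) = phi Q p + phi Q q := by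
  refine le_antisymm (phi_add_le hQ hone hbnd p q) ?_
  have h1 := phi_add_le hQ hone hbnd (p + q) (-q)
  rw [show p + q + -q = p by ring, phi_neg hQ hone htri hbnd q] at h1
  linarith

omit htri in
theorem phi_smul_le {c : ℝ} (hc : 0 < c) (p : MvPolynomial (Fin n) ℝ) :
    phi Q (MvPolynomial.C c * p) ≤ c * phi Q p := by
  by_contra hlt
  push_neg at hlt
  have h1 : MvPolynomial.C (phi Q p + (phi Q (MvPolynomial.C c * p) - c * phi Q p)/(2*c)) - p ∈ Q :=
    mem_U_of_gt hQ hone hbnd (by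
      have : 0 < (phi Q (MvPolynomial.C c * p) - c * phi Q p)/(2*c) :=
        div_pos (by linarith) (by linarith)
      linarith)
  have h2 := hQ.smul' hc.le h1
  rw [show MvPolynomial.C c * (MvPolynomial.C (phi Q p
      + (phi Q (MvPolynomial.C c * p) - c * phi Q p)/(2*c)) - p)
      = MvPolynomial.C (c * (phi Q p + (phi Q (MvPolynomial.C c * p) - c * phi Q p)/(2*c)))
        - MvPolynomial.C c * p by
    rw [map_mul]; ring] at h2
  have h3 := phi_le hQ hone hbnd h2
  have hexp : c * (phi Q p + (phi Q (MvPolynomial.C c * p) - c * phi Q p)/(2*c))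
      = c * phi Q p + (phi Q (MvPolynomial.C c * p) - c * phi Q p)/2 := by
    field_simp
  rw [hexp] at h3
  linarith

omit htri in
theorem phi_smul {c : ℝ} (hc : 0 ≤ c) (p : MvPolynomial (Fin n) ℝ) :
    phi Q (MvPolynomial.C c * p) = c * phi Q p := by
  rcases eq_or_lt_of_le hc with rfl | hc
  · rw [map_zero, zero_mul, zero_mul]
    rw [show (0 : MvPolynomial (Fin n) ℝ) = MvPolynomial.C 0 by rw [map_zero]]
    rw [phi_const hQ hone hbnd]
  · refine le_antisymm (phi_smul_le hQ hone hbnd hc p) ?_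
    have := phi_smul_le hQ hone hbnd (c := c⁻¹) (by positivity) (MvPolynomial.C c * p)
    rw [← mul_assoc, ← map_mul, inv_mul_cancel₀ hc.ne', map_one, one_mul] at this
    calc c * phi Q p ≤ c * (c⁻¹ * phi Q (MvPolynomial.C c * p)) := by
          apply mul_le_mul_of_nonneg_left this hc.le
    _ = phi Q (MvPolynomial.C c * p) := by field_simp

theorem mem_of_phi_pos {p : MvPolynomial (Fin n) ℝ} (hp : 0 < phi Q p) : p ∈ Q := by
  rcases htri p with h | h
  · exact h
  · exfalso
    have : MvPolynomial.C (phi Q p / 2) - p ∈ Q := by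
      have h1 : (MvPolynomial.C (phi Q p / 2) : MvPolynomial (Fin n) ℝ) ∈ Q :=
        hQ.const (by linarith)
      have := hQ.add' h1 h
      rw [show MvPolynomial.C (phi Q p / 2) + -p = MvPolynomial.C (phi Q p / 2) - p by ring]
        at this
      exact this
    have := phi_le hQ hone hbnd this
    linarith

theorem phi_sq_mem {b : MvPolynomial (Fin n) ℝ} (hbQ : b ∈ Q) (hbpos : 0 < phi Q b) :
    phi Q (b ^ 2) = phi Q b ^ 2 := by
  set β := phi Q b with hβ
  have hβpos : 0 < β := hbpos
  -- lower bound
  have hlow : β ^ 2 ≤ phi Q (b ^ 2) := by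
    have hsq : (b - MvPolynomial.C β) ^ 2 ∈ Q := hQ.sos (IsSOS.sq _)
    have hid : (b - MvPolynomial.C β) ^ 2
        = b ^ 2 + (MvPolynomial.C (2 * β) * (-b) + MvPolynomial.C (β ^ 2)) := by
      simp only [map_mul, map_pow, map_ofNat]; ring
    rw [hid] at hsq
    have h1 := phi_nonneg_of_mem hQ hone hbnd hsq
    rw [phi_add hQ hone htri hbnd, phi_add hQ hone htri hbnd,
      phi_smul hQ hone hbnd (by linarith), phi_neg hQ hone htri hbnd,
      phi_const hQ hone hbnd] at h1
    nlinarith [h1]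
  -- upper bound
  have hup : ∀ r : ℝ, β < r → phi Q (b ^ 2) ≤ r ^ 2 := by
    intro r hr
    have hrpos : 0 < r := lt_trans hβpos hr
    have h1 : MvPolynomial.C r - b ∈ Q := mem_U_of_gt hQ hone hbnd hr
    have h2 : MvPolynomial.C r + b ∈ Q := by
      have := hQ.add' (hQ.const (c := r) hrpos.le) hbQ
      exact this
    have h3 : (MvPolynomial.C r + b) ^ 2 * (MvPolynomial.C r - b)
        + (MvPolynomial.C r - b) ^ 2 * (MvPolynomial.C r + b) ∈ Q :=
      hQ.add' (hQ.sos_mul (IsSOS.sq _) h1) (hQ.sos_mul (IsSOS.sq _) h2)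
    have h4 := hQ.smul' (c := 1/(2*r)) (by positivity) h3
    rw [show MvPolynomial.C ((1:ℝ)/(2*r)) * ((MvPolynomial.C r + b) ^ 2 * (MvPolynomial.C r - b)
        + (MvPolynomial.C r - b) ^ 2 * (MvPolynomial.C r + b))
        = MvPolynomial.C (1/(2*r) * (2*r)) * (MvPolynomial.C (r^2) - b^2) by
      rw [map_mul, map_mul, map_pow, map_ofNat]; ring] at h4
    rw [div_mul_cancel₀ _ (by positivity : (2*r : ℝ) ≠ 0), map_one, one_mul] at h4
    -- φ(b²) ≤ r²
    have h5 := phi_nonneg_of_mem hQ hone hbnd h4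
    have h6 : phi Q (MvPolynomial.C (r^2) - b^2)
        = r^2 - phi Q (b^2) := by
      rw [show MvPolynomial.C (r^2) - b^2 = MvPolynomial.C (r^2) + -(b^2) by ring]
      rw [phi_add hQ hone htri hbnd, phi_const hQ hone hbnd, phi_neg hQ hone htri hbnd]
      ring
    rw [h6] at h5
    linarith
  have hupfin : phi Q (b ^ 2) ≤ β ^ 2 := by
    by_contra hgt
    push_neg at hgt
    set w := phi Q (b ^ 2) with hw
    have hwpos : 0 < w := by nlinarith
    have hsq : β < Real.sqrt w := by
      have h := Real.sq_sqrt hwpos.le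
      nlinarith [Real.sqrt_nonneg w]
    obtain ⟨r, hr1, hr2⟩ := exists_between hsq
    have := hup r hr1
    have h := Real.sq_sqrt hwpos.le
    nlinarith [hβpos]
  linarith

theorem phi_sq (p : MvPolynomial (Fin n) ℝ) : phi Q (p ^ 2) = phi Q p ^ 2 := by
  set B := |phi Q p| + 1 with hB
  have hBpos : 0 < phi Q p + B := by
    have := neg_abs_le (phi Q p)
    rw [hB]; linarith
  set b := p + MvPolynomial.C B with hbdef
  have hφb : phi Q b = phi Q p + B := by
    rw [hbdef, phi_add hQ hone htri hbnd, phi_const hQ hone hbnd]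
  have hbQ : b ∈ Q := mem_of_phi_pos hQ hone htri hbnd (by rw [hφb]; exact hBpos)
  have hsq := phi_sq_mem hQ hone htri hbnd hbQ (by rw [hφb]; exact hBpos)
  have hid : p ^ 2 = b ^ 2 + (MvPolynomial.C (2 * B) * (-b) + MvPolynomial.C (B ^ 2)) := by
    rw [hbdef]; simp only [map_mul, map_pow, map_ofNat]; ring
  rw [hid, phi_add hQ hone htri hbnd, phi_add hQ hone htri hbnd,
    phi_smul hQ hone hbnd (by rw [hB]; positivity), phi_neg hQ hone htri hbnd,
    phi_const hQ hone hbnd, hsq, hφb]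
  ring

theorem phi_mul (p q : MvPolynomial (Fin n) ℝ) : phi Q (p * q) = phi Q p * phi Q q := by
  have h4 : (MvPolynomial.C ((1:ℝ)/4) * 4 : MvPolynomial (Fin n) ℝ) = 1 := by
    rw [show (4 : MvPolynomial (Fin n) ℝ) = MvPolynomial.C (4:ℝ) by rw [map_ofNat],
      ← map_mul]
    norm_num
  have hid : p * q = MvPolynomial.C ((1:ℝ)/4) * ((p + q)^2 + -((p - q)^2)) := by
    linear_combination (-(p*q)) * h4
  rw [hid, phi_smul hQ hone hbnd (by norm_num), phi_add hQ hone htri hbnd,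
    phi_neg hQ hone htri hbnd, phi_sq hQ hone htri hbnd, phi_sq hQ hone htri hbnd,
    phi_add hQ hone htri hbnd, show p - q = p + -q from sub_eq_add_neg p q,
    phi_add hQ hone htri hbnd, phi_neg hQ hone htri hbnd]
  ring

end Char
end Putinar

/-- Putinar's Positivstellensatz: if the quadratic module `M_S` generated
by `g₁, …, g_m` is Archimedean (there is `N ∈ ℕ` with `N − Σᵢ xᵢ² ∈ M_S`), and
`V > 0` on `S = {x : gᵢ(x) ≥ 0, i = 1,…,m}`, then `V ∈ M_S`. -/
theorem putinar_positivstellensatz {n m : ℕ} (g : Fin m → MvPolynomial (Fin n) ℝ)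
    (harch : ∃ N : ℕ, MemQuadraticModule g
      ((N : MvPolynomial (Fin n) ℝ) - ∑ i : Fin n, (MvPolynomial.X i) ^ 2))
    (V : MvPolynomial (Fin n) ℝ)
    (hpos : ∀ x : Fin n → ℝ, (∀ i, 0 ≤ MvPolynomial.eval x (g i)) →
      0 < MvPolynomial.eval x V) :
    MemQuadraticModule g V := by
  classical
  by_cases hone : (-1 : MvPolynomial (Fin n) ℝ) ∈ {p : MvPolynomial (Fin n) ℝ |
      ∃ t s, MemQuadraticModule g t ∧ IsSOS s ∧ p = t + s * (-V)}
  · -- `σ V ∈ 1 + M`, so `V ∈ M` by the Archimedean iteration lemma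
    obtain ⟨t, s, ht, hs, heq⟩ := hone
    apply Putinar.mem_of_sos_mul g harch hs
    rw [show s * V - 1 = t by linear_combination heq]
    exact ht
  · -- otherwise extend to a maximal proper quadratic module and reach a contradiction
    exfalso
    have hM₁qm : Putinar.QM {p : MvPolynomial (Fin n) ℝ |
        ∃ t s, MemQuadraticModule g t ∧ IsSOS s ∧ p = t + s * (-V)} := by
      refine ⟨fun s hs => ⟨s, 0, Putinar.mem_of_sos g hs, IsSOS.zero, by ring⟩, ?_, ?_⟩
      · rintro a b ⟨t, s, ht, hs, rfl⟩ ⟨t', s', ht', hs', rfl⟩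
        exact ⟨t + t', s + s', Putinar.mem_add g ht ht', hs.add hs', by ring⟩
      · rintro s a hs ⟨t, u, ht, hu, rfl⟩
        exact ⟨s * t, s * u, Putinar.mem_sos_mul g hs ht, hs.mul hu, by ring⟩
    obtain ⟨Q, hQ, honeQ, hsub, htri⟩ := Putinar.exists_maximal_qm hM₁qm hone
    have hMsub : ∀ p : MvPolynomial (Fin n) ℝ, MemQuadraticModule g p → p ∈ Q :=
      fun p hp => hsub ⟨p, 0, hp, IsSOS.zero, by ring⟩
    have hbnd : ∀ p : MvPolynomial (Fin n) ℝ, ∃ N : ℝ,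
        (MvPolynomial.C N - p) ∈ Q ∧ (MvPolynomial.C N + p) ∈ Q := by
      intro p
      obtain ⟨N, h1, h2⟩ := Putinar.bnd_all g harch p
      exact ⟨N, hMsub _ h1, hMsub _ h2⟩
    set x : Fin n → ℝ := fun i => Putinar.phi Q (MvPolynomial.X i) with hx
    have heval : ∀ p : MvPolynomial (Fin n) ℝ, Putinar.phi Q p = MvPolynomial.eval x p := by
      intro p
      induction p using MvPolynomial.induction_on with
      | C c => rw [Putinar.phi_const hQ honeQ hbnd]; simp
      | add p q hp hq =>
        rw [Putinar.phi_add hQ honeQ htri hbnd, hp, hq]; simp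
      | mul_X p i hp =>
        rw [Putinar.phi_mul hQ honeQ htri hbnd, hp]; simp [hx]
    have hgS : ∀ i, 0 ≤ MvPolynomial.eval x (g i) := by
      intro i
      rw [← heval]
      exact Putinar.phi_nonneg_of_mem hQ honeQ hbnd (hMsub _ (Putinar.mem_g g i))
    have hVpos := hpos x hgS
    have hnegV : -V ∈ Q := hsub ⟨0, 1, Putinar.mem_zero g, IsSOS.one, by ring⟩
    have hphiV := Putinar.phi_nonneg_of_mem hQ honeQ hbnd hnegV
    rw [heval] at hphiV
    rw [map_neg] at hphiV
    linarith
end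

section
/- Let A = [[−1, −2], [−1, −1]] ∈ ℝ^{2×2}, let K = {x ∈ ℝ² : 4x₁ − x₂ ≥ 0 and 4x₂ − x₁ ≥ 0}, and let V(x) = 2.9·x₁² + x₁x₂ + x₂². Then: (i) A has the real eigenvalue −1 + √2 > 0 (so A is not Hurwitz); (ii) V(x) > 0 for every x ∈ ℝ² \ {0}; (iii) every x ∈ K has x₁ ≥ 0 and x₂ ≥ 0; and (iv) ⟨∇V(x), Ax⟩ = −6.8·x₁² − 15.6·x₁x₂ − 4·x₂² < 0 for every x ∈ K \ {0}. -/
open RealInnerProductSpace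

noncomputable section

/-- `A = [[−1, −2], [−1, −1]]`. -/
def Amat : Matrix (Fin 2) (Fin 2) ℝ := !![-1, -2; -1, -1]

/-- The cone `K = {x ∈ ℝ² : 4x₁ − x₂ ≥ 0, 4x₂ − x₁ ≥ 0}`. -/
def Kcone : Set (EuclideanSpace ℝ (Fin 2)) :=
  {x | 0 ≤ 4 * x 0 - x 1 ∧ 0 ≤ 4 * x 1 - x 0}

/-- `V(x) = 2.9 x₁² + x₁x₂ + x₂²`. -/
def Vquad (x : EuclideanSpace ℝ (Fin 2)) : ℝ :=
  2.9 * (x 0) ^ 2 + x 0 * x 1 + (x 1) ^ 2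

lemma grad_V (x : EuclideanSpace ℝ (Fin 2)) :
    HasGradientAt Vquad ((WithLp.equiv 2 (Fin 2 → ℝ)).symm ![5.8 * x 0 + x 1, x 0 + 2 * x 1]) x := by
  rw [hasGradientAt_iff_hasFDerivAt]
  have h0 : HasFDerivAt (fun y : EuclideanSpace ℝ (Fin 2) => y 0) (EuclideanSpace.proj 0 : EuclideanSpace ℝ (Fin 2) →L[ℝ] ℝ) x := by simpa using (EuclideanSpace.proj (0:Fin 2) : EuclideanSpace ℝ (Fin 2) →L[ℝ] ℝ).hasFDerivAt
  have h1 : HasFDerivAt (fun y : EuclideanSpace ℝ (Fin 2) => y 1) (EuclideanSpace.proj 1 : EuclideanSpace ℝ (Fin 2) →L[ℝ] ℝ) x := by simpa using (EuclideanSpace.proj (1:Fin 2) : EuclideanSpace ℝ (Fin 2) →L[ℝ] ℝ).hasFDerivAt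
  have key := (((h0.mul h0).const_mul (2.9:ℝ)).add (h0.mul h1)).add (h1.mul h1)
  refine HasFDerivAt.congr_fderiv (key.congr_of_eventuallyEq ?_) ?_
  · filter_upwards with y; simp [Vquad]; ring
  · apply ContinuousLinearMap.ext; intro v
    simp [InnerProductSpace.toDual_apply_apply, PiLp.inner_apply, RCLike.inner_apply,
      Fin.sum_univ_two, WithLp.equiv_symm_apply, PiLp.toLp_apply]
    ring

lemma Amat_apply (x : EuclideanSpace ℝ (Fin 2)) :
    (Matrix.toEuclideanLin Amat x) 0 = -x 0 - 2 * x 1 ∧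
    (Matrix.toEuclideanLin Amat x) 1 = -x 0 - x 1 := by
  constructor
  all_goals
    show (Matrix.mulVec Amat ((WithLp.equiv 2 (Fin 2 → ℝ)) x)) _ = _
    simp [Amat, Matrix.mulVec, dotProduct, Fin.sum_univ_two, Matrix.vecHead, Matrix.vecTail]
    ring

lemma coords_zero {x : EuclideanSpace ℝ (Fin 2)} (h0 : x 0 = 0) (h1 : x 1 = 0) : x = 0 := by
  ext i; fin_cases i <;> simpa

/-- for `A = [[−1,−2],[−1,−1]]`, `K = {4x₁ − x₂ ≥ 0, 4x₂ − x₁ ≥ 0}` and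
`V(x) = 2.9x₁² + x₁x₂ + x₂²`:
(i) `A` has the real eigenvalue `−1 + √2 > 0` (so `A` is not Hurwitz);
(ii) `V(x) > 0` for every `x ≠ 0`;
(iii) every `x ∈ K` has `x₁ ≥ 0` and `x₂ ≥ 0`;
(iv) `⟨∇V(x), Ax⟩ = −6.8x₁² − 15.6x₁x₂ − 4x₂² < 0` for every `x ∈ K \ {0}`. -/
theorem example_conic_lyapunov :
    (Module.End.HasEigenvalue
        (Matrix.toEuclideanLin Amat : Module.End ℝ (EuclideanSpace ℝ (Fin 2)))
        (-1 + Real.sqrt 2) ∧ 0 < -1 + Real.sqrt 2) ∧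
    (∀ x : EuclideanSpace ℝ (Fin 2), x ≠ 0 → 0 < Vquad x) ∧
    (∀ x ∈ Kcone, 0 ≤ x 0 ∧ 0 ≤ x 1) ∧
    (∀ x ∈ Kcone,
      ⟪gradient Vquad x, Matrix.toEuclideanLin Amat x⟫ =
        -6.8 * (x 0) ^ 2 - 15.6 * (x 0) * (x 1) - 4 * (x 1) ^ 2 ∧
      (x ≠ 0 → ⟪gradient Vquad x, Matrix.toEuclideanLin Amat x⟫ < 0)) := by
  have sqrt2 : Real.sqrt 2 * Real.sqrt 2 = 2 := Real.mul_self_sqrt (by norm_num)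
  have sqrt2pos : 0 < -1 + Real.sqrt 2 := by nlinarith [Real.sqrt_nonneg 2]
  refine ⟨⟨?_, sqrt2pos⟩, ?_, ?_, ?_⟩
  · -- eigenvalue
    set v : EuclideanSpace ℝ (Fin 2) := (WithLp.equiv 2 (Fin 2 → ℝ)).symm ![Real.sqrt 2, -1] with hvdef
    apply Module.End.hasEigenvalue_of_hasEigenvector (x := v)
    constructor
    · rw [Module.End.mem_eigenspace_iff]
      have e0 := (Amat_apply v).1
      have e1 := (Amat_apply v).2
      have hv0 : v 0 = Real.sqrt 2 := rfl
      have hv1 : v 1 = -1 := rfl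
      ext i; fin_cases i
      · show (Matrix.toEuclideanLin Amat v) 0 = ((-1 + Real.sqrt 2) • v) 0
        rw [e0]; show _ = (-1 + Real.sqrt 2) * v 0
        rw [hv0, hv1]; nlinarith
      · show (Matrix.toEuclideanLin Amat v) 1 = ((-1 + Real.sqrt 2) • v) 1
        rw [e1]; show _ = (-1 + Real.sqrt 2) * v 1
        rw [hv0, hv1]; nlinarith
    · intro h
      have : v 1 = -1 := rfl
      rw [h] at this
      norm_num at this
  · -- positivity of V
    intro x hx
    rcases (by by_contra h; push_neg at h; exact hx (coords_zero h.1 h.2) :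
        x 0 ≠ 0 ∨ x 1 ≠ 0) with h | h
    all_goals
      unfold Vquad
      nlinarith [sq_nonneg (x 0 + x 1), sq_nonneg (x 0), sq_nonneg (x 1), sq_pos_of_ne_zero h]
  · intro x ⟨h1, h2⟩
    constructor <;> linarith
  · intro x hx
    obtain ⟨h1, h2⟩ := hx
    have hg := (grad_V x).gradient
    have key : ⟪gradient Vquad x, Matrix.toEuclideanLin Amat x⟫ =
        -6.8 * (x 0) ^ 2 - 15.6 * (x 0) * (x 1) - 4 * (x 1) ^ 2 := by
      rw [hg]
      obtain ⟨e0, e1⟩ := Amat_apply x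
      rw [PiLp.inner_apply]
      simp only [RCLike.inner_apply, starRingEnd_apply, star_trivial, Fin.sum_univ_two,
        WithLp.equiv_symm_apply, PiLp.toLp_apply, Matrix.cons_val_zero, Matrix.cons_val_one, Matrix.head_cons]
      rw [e0, e1]; ring
    refine ⟨key, fun hne => ?_⟩
    rw [key]
    have hx0 : 0 ≤ x 0 := by linarith
    have hx1 : 0 ≤ x 1 := by linarith
    rcases (by by_contra h; push_neg at h; exact hne (coords_zero h.1 h.2) :
        x 0 ≠ 0 ∨ x 1 ≠ 0) with h | h
    · have : 0 < x 0 := lt_of_le_of_ne hx0 (Ne.symm h)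
      nlinarith
    · have : 0 < x 1 := lt_of_le_of_ne hx1 (Ne.symm h)
      nlinarith

end
end
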